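/- Let n ≥ 3 be an integer, γ ∈ (0,1] and C ≥ 1. Let f, h : ℝⁿ → [0, ∞) be measurable functions such that f(x) ≥ 1/C and |f(x) − h(x)| ≤ C |x|^{2−n−γ} for all x with |x| ≥ 1, and let μ, ν be the measures on ℝⁿ with densities f and h with respect to Lebesgue measure. Then there exists C' ≥ 1, depending only on n and C, such that for every ρ ≥ 1, every bounded measurable set Ω ⊆ ℝⁿ, and every α ∈ (1, n−1+γ): | μ(Ω \ B_ρ) − ν(Ω \ B_ρ) | ≤ C' · ((n−1+γ−α)/(α−1))^{(n−1+γ−α)/n} · μ(Ω \ B_ρ)^{(1−γ+α)/n} · ρ^{1−α}. -/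

import Mathlib

open MeasureTheory

open Metric Set

lemma annulus_bound (n : ℕ) (hn : 3 ≤ n) (β : ℝ) (hβ0 : 0 < β) (hβ : β ≤ (n:ℝ) - 1)
    (R : ℝ) (hR : 1 ≤ R) :
    ∫ x in (closedBall (0 : EuclideanSpace ℝ (Fin n)) R \ ball 0 1), ‖x‖ ^ (-β) ≤
      (n : ℝ) * (volume (ball (0 : EuclideanSpace ℝ (Fin n)) 1)).toReal * R ^ ((n:ℝ) - β) := by
  have hn0 : 0 < n := by omega
  haveI : Nontrivial (EuclideanSpace ℝ (Fin n)) := by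
    apply Module.finrank_pos_iff (R := ℝ) |>.1
    rw [finrank_euclideanSpace_fin]; exact hn0
  set Ann : Set (EuclideanSpace ℝ (Fin n)) := closedBall 0 R \ ball 0 1 with hAnn
  have hmeas : MeasurableSet Ann := measurableSet_closedBall.diff measurableSet_ball
  set g : ℝ → ℝ := Set.indicator (Set.Icc 1 R) (fun r => r ^ (-β)) with hg
  have hset : ∀ x : EuclideanSpace ℝ (Fin n), x ∈ Ann ↔ ‖x‖ ∈ Set.Icc 1 R := by
    intro x
    simp [hAnn, mem_closedBall, mem_ball, dist_zero_right, not_lt, and_comm]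
  have h1 : ∫ x in Ann, ‖x‖ ^ (-β) = ∫ x : EuclideanSpace ℝ (Fin n), g ‖x‖ := by
    rw [← integral_indicator hmeas]
    congr 1
    ext x
    by_cases hx : x ∈ Ann
    · rw [Set.indicator_of_mem hx, hg, Set.indicator_of_mem ((hset x).1 hx)]
    · rw [Set.indicator_of_notMem hx, hg,
        Set.indicator_of_notMem (fun hc => hx ((hset x).2 hc))]
  have hIcc : Set.Icc (1:ℝ) R ⊆ Set.Ioi 0 := fun y hy => lt_of_lt_of_le one_pos hy.1
  have h2 : ∀ y : ℝ, y ^ (Module.finrank ℝ (EuclideanSpace ℝ (Fin n)) - 1) • g y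
      = Set.indicator (Set.Icc 1 R) (fun y => y ^ ((n:ℝ)-1-β)) y := by
    intro y
    by_cases hy : y ∈ Set.Icc 1 R
    · have hy0 : (0:ℝ) < y := hIcc hy
      rw [hg, Set.indicator_of_mem hy, Set.indicator_of_mem hy, smul_eq_mul,
        ← Real.rpow_natCast y _, ← Real.rpow_add hy0]
      congr 1
      rw [finrank_euclideanSpace_fin, Nat.cast_sub (by omega)]
      push_cast; ring
    · rw [hg, Set.indicator_of_notMem hy, Set.indicator_of_notMem hy, smul_zero]
  have h3 : ∫ y in Set.Ioi (0:ℝ), y ^ (Module.finrank ℝ (EuclideanSpace ℝ (Fin n)) - 1) • g y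
      = (R ^ ((n:ℝ) - β) - 1) / ((n:ℝ) - β) := by
    simp_rw [h2]
    rw [integral_indicator measurableSet_Icc, Measure.restrict_restrict measurableSet_Icc,
      Set.inter_eq_self_of_subset_left hIcc, integral_Icc_eq_integral_Ioc,
      ← intervalIntegral.integral_of_le hR, integral_rpow (Or.inl (by linarith))]
    rw [show (n:ℝ)-1-β+1 = (n:ℝ)-β by ring, Real.one_rpow]
  rw [h1, integral_fun_norm_addHaar volume g, h3, finrank_euclideanSpace_fin,
    nsmul_eq_mul, smul_eq_mul]
  have hv : 0 ≤ (volume (ball (0 : EuclideanSpace ℝ (Fin n)) 1)).toReal := ENNReal.toReal_nonneg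
  have hRnb : 1 ≤ R ^ ((n:ℝ) - β) := Real.one_le_rpow hR (by linarith)
  have hdiv : (R ^ ((n:ℝ)-β) - 1) / ((n:ℝ)-β) ≤ R ^ ((n:ℝ)-β) :=
    le_trans (div_le_self (by linarith) (by linarith)) (by linarith)
  have := mul_le_mul_of_nonneg_left hdiv (mul_nonneg (by positivity : (0:ℝ) ≤ (n:ℝ)) hv)
  simp only [measureReal_def] at *
  nlinarith [this]

lemma integrableOn_rpow_neg (n : ℕ) (β : ℝ) (hβ0 : 0 < β)
    (S : Set (EuclideanSpace ℝ (Fin n))) (hS : MeasurableSet S)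
    (hS1 : ∀ x ∈ S, 1 ≤ ‖x‖) (hSfin : volume S < ⊤) :
    IntegrableOn (fun x : EuclideanSpace ℝ (Fin n) => ‖x‖ ^ (-β)) S volume := by
  have hcont : ContinuousOn (fun x : EuclideanSpace ℝ (Fin n) => ‖x‖ ^ (-β)) S := by
    intro x hx
    have hne : ‖x‖ ≠ 0 := by have := hS1 x hx; linarith
    exact ((continuous_norm.continuousAt).rpow_const (Or.inl hne)).continuousWithinAt
  refine ⟨hcont.aestronglyMeasurable hS, ?_⟩
  haveI : Fact (volume S < ⊤) := ⟨hSfin⟩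
  apply HasFiniteIntegral.of_bounded (C := (1:ℝ))
  · filter_upwards [ae_restrict_mem hS] with x hx
    rw [Real.norm_eq_abs, abs_of_nonneg (Real.rpow_nonneg (norm_nonneg _) _)]
    exact Real.rpow_le_one_of_one_le_of_nonpos (hS1 x hx) (by linarith)

lemma key_bound (n : ℕ) (hn : 3 ≤ n) (β : ℝ) (hβ0 : 0 < β) (hβ : β ≤ (n:ℝ) - 1)
    (A : Set (EuclideanSpace ℝ (Fin n))) (hA : MeasurableSet A)
    (hA1 : ∀ x ∈ A, 1 ≤ ‖x‖) (hAfin : volume A < ⊤) :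
    ∫ x in A, ‖x‖ ^ (-β) ≤
      (1 + (n:ℝ) * (volume (ball (0 : EuclideanSpace ℝ (Fin n)) 1)).toReal)
        * (volume A).toReal ^ (((n:ℝ) - β)/(n:ℝ)) := by
  have hn0 : (0:ℝ) < (n:ℝ) := by positivity -- fix: n could be 0? no, 3 ≤ n
  set v : ℝ := (volume (ball (0 : EuclideanSpace ℝ (Fin n)) 1)).toReal with hvdef
  have hv : 0 ≤ v := ENNReal.toReal_nonneg
  set T : ℝ := (volume A).toReal with hT
  have hT0 : 0 ≤ T := ENNReal.toReal_nonneg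
  have hq0 : 0 < ((n:ℝ) - β)/(n:ℝ) := by
    apply div_pos (by linarith) hn0
  have hq1 : ((n:ℝ) - β)/(n:ℝ) ≤ 1 := by
    rw [div_le_one hn0]; linarith
  have hInt : IntegrableOn (fun x : EuclideanSpace ℝ (Fin n) => ‖x‖ ^ (-β)) A volume :=
    integrableOn_rpow_neg n β hβ0 A hA hA1 hAfin
  by_cases hTle : T ≤ 1
  · -- small case
    have h1 : ∫ x in A, ‖x‖ ^ (-β) ≤ ∫ _x in A, (1:ℝ) := by
      apply setIntegral_mono_on hInt (integrableOn_const hAfin.ne) hA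
      intro x hx
      exact Real.rpow_le_one_of_one_le_of_nonpos (hA1 x hx) (by linarith)
    rw [setIntegral_const, smul_eq_mul, mul_one] at h1
    have h2 : T ≤ T ^ (((n:ℝ) - β)/(n:ℝ)) := by
      rcases eq_or_lt_of_le hT0 with h | h
      · rw [← h, Real.zero_rpow hq0.ne']
      · calc T = T ^ (1:ℝ) := (Real.rpow_one T).symm
          _ ≤ T ^ (((n:ℝ) - β)/(n:ℝ)) := Real.rpow_le_rpow_of_exponent_ge h hTle hq1
    calc ∫ x in A, ‖x‖ ^ (-β) ≤ T := h1
      _ ≤ T ^ (((n:ℝ) - β)/(n:ℝ)) := h2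
      _ ≤ _ := le_mul_of_one_le_left (Real.rpow_nonneg hT0 _) (by nlinarith)
  · push_neg at hTle
    set R : ℝ := T ^ ((n:ℝ)⁻¹) with hRdef
    have hR : 1 ≤ R := Real.one_le_rpow hTle.le (by positivity)
    have hR0 : 0 < R := lt_of_lt_of_le one_pos hR
    set K := closedBall (0 : EuclideanSpace ℝ (Fin n)) R with hK
    have hKm : MeasurableSet K := measurableSet_closedBall
    have hsplit : (∫ x in A ∩ K, ‖x‖ ^ (-β)) + ∫ x in A \ K, ‖x‖ ^ (-β)
        = ∫ x in A, ‖x‖ ^ (-β) := integral_inter_add_diff hKm hInt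
    -- first piece
    have hAnnfin : volume (closedBall (0 : EuclideanSpace ℝ (Fin n)) R \ ball 0 1) < ⊤ :=
      lt_of_le_of_lt (measure_mono diff_subset) measure_closedBall_lt_top
    have hAnn1 : ∀ x ∈ closedBall (0 : EuclideanSpace ℝ (Fin n)) R \ ball 0 1, 1 ≤ ‖x‖ := by
      intro x hx
      have := hx.2
      simpa [mem_ball, dist_zero_right] using this
    have hIntAnn : IntegrableOn (fun x : EuclideanSpace ℝ (Fin n) => ‖x‖ ^ (-β))
        (closedBall 0 R \ ball 0 1) volume :=
      integrableOn_rpow_neg n β hβ0 _ (measurableSet_closedBall.diff measurableSet_ball)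
        hAnn1 hAnnfin
    have hsub : A ∩ K ⊆ closedBall (0 : EuclideanSpace ℝ (Fin n)) R \ ball 0 1 := by
      intro x hx
      refine ⟨hx.2, ?_⟩
      simp only [mem_ball, dist_zero_right, not_lt]
      exact hA1 x hx.1
    have h1 : ∫ x in A ∩ K, ‖x‖ ^ (-β) ≤
        ∫ x in closedBall (0 : EuclideanSpace ℝ (Fin n)) R \ ball 0 1, ‖x‖ ^ (-β) := by
      apply setIntegral_mono_set hIntAnn
      · filter_upwards with x using Real.rpow_nonneg (norm_nonneg _) _
      · exact HasSubset.Subset.eventuallyLE hsub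
    have h1' := le_trans h1 (annulus_bound n hn β hβ0 hβ R hR)
    -- second piece
    have h2 : ∫ x in A \ K, ‖x‖ ^ (-β) ≤ T * R ^ (-β) := by
      have hb : ∫ x in A \ K, ‖x‖ ^ (-β) ≤ ∫ _x in A \ K, R ^ (-β) := by
        apply setIntegral_mono_on (hInt.mono_set diff_subset)
          (integrableOn_const (lt_of_le_of_lt (measure_mono diff_subset) hAfin).ne)
          (hA.diff hKm)
        intro x hx
        have hxR : R ≤ ‖x‖ := by
          have := hx.2
          simp only [hK, mem_closedBall, dist_zero_right, not_le] at this
          exact this.le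
        exact Real.rpow_le_rpow_of_nonpos hR0 hxR (by linarith)
      rw [setIntegral_const, smul_eq_mul] at hb
      refine le_trans hb (mul_le_mul_of_nonneg_right ?_ (Real.rpow_nonneg hR0.le _))
      exact ENNReal.toReal_mono hAfin.ne (measure_mono diff_subset)
    -- identities
    have hT0' : 0 < T := lt_trans one_pos hTle
    have e1 : T * R ^ (-β) = T ^ (((n:ℝ) - β)/(n:ℝ)) := by
      rw [hRdef, ← Real.rpow_mul hT0]
      nth_rewrite 1 [← Real.rpow_one T]
      rw [← Real.rpow_add hT0']
      congr 1
      field_simp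
      ring
    have e2 : R ^ ((n:ℝ) - β) = T ^ (((n:ℝ) - β)/(n:ℝ)) := by
      rw [hRdef, ← Real.rpow_mul hT0]
      congr 1
      field_simp
    rw [← hsplit]
    calc (∫ x in A ∩ K, ‖x‖ ^ (-β)) + ∫ x in A \ K, ‖x‖ ^ (-β)
        ≤ (n:ℝ) * v * R ^ ((n:ℝ) - β) + T * R ^ (-β) := by
          refine add_le_add h1' h2
      _ = (1 + (n:ℝ) * v) * T ^ (((n:ℝ) - β)/(n:ℝ)) := by rw [e1, e2]; ring

set_option maxHeartbeats 1000000 in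
lemma Kb (n : ℕ) (hn : 3 ≤ n) (β δ : ℝ) (hβ0 : 0 < β) (hβ : β ≤ (n:ℝ)-1)
    (hδ0 : 0 < δ) (hδ : δ ≤ (n:ℝ)-1) :
    1 / (3 * ((n:ℝ)-1)) ≤ (β/δ) ^ (β/(n:ℝ)) := by
  have hn3 : (3:ℝ) ≤ (n:ℝ) := by exact_mod_cast hn
  have hn0 : (0:ℝ) < n := by linarith
  have hq0 : 0 ≤ β/(n:ℝ) := by positivity
  have hq1 : β/(n:ℝ) ≤ 1 := by rw [div_le_one hn0]; linarith
  rw [Real.div_rpow hβ0.le hδ0.le]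
  have hden : δ ^ (β/(n:ℝ)) ≤ (n:ℝ) - 1 := by
    calc δ ^ (β/(n:ℝ)) ≤ ((n:ℝ)-1) ^ (β/(n:ℝ)) := Real.rpow_le_rpow hδ0.le hδ hq0
      _ ≤ ((n:ℝ)-1) ^ (1:ℝ) := Real.rpow_le_rpow_of_exponent_le (by linarith) hq1
      _ = (n:ℝ)-1 := Real.rpow_one _
  have hnum : (1:ℝ)/3 ≤ β ^ (β/(n:ℝ)) := by
    have hlog : -1 ≤ β * Real.log β := by
      rcases le_or_gt 1 β with hb | hb
      · nlinarith [Real.log_nonneg hb]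
      · have h2 : Real.log β⁻¹ ≤ β⁻¹ - 1 := Real.log_le_sub_one_of_pos (by positivity)
        rw [Real.log_inv] at h2
        have h3 : 1 - β⁻¹ ≤ Real.log β := by linarith
        have h4 : β * (1 - β⁻¹) ≤ β * Real.log β := by nlinarith
        have h5 : β * (1 - β⁻¹) = β - 1 := by field_simp
        nlinarith
    have h6 : -1 ≤ (β/(n:ℝ)) * Real.log β := by
      rw [show (β/(n:ℝ))*Real.log β = (β*Real.log β)/(n:ℝ) by ring,
        le_div_iff₀ hn0]
      nlinarith
    have hexp : (1:ℝ)/3 ≤ Real.exp (-1) := by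
      rw [Real.exp_neg, ← one_div]
      exact one_div_le_one_div_of_le (Real.exp_pos 1)
        (by linarith [Real.exp_one_lt_d9])
    have h7 : Real.exp (-1) ≤ Real.exp ((β/(n:ℝ)) * Real.log β) := Real.exp_le_exp.2 h6
    have h8 : β ^ (β/(n:ℝ)) = Real.exp ((β/(n:ℝ)) * Real.log β) := by
      rw [Real.rpow_def_of_pos hβ0, mul_comm]
    linarith
  have hDpos : 0 < δ ^ (β/(n:ℝ)) := Real.rpow_pos_of_pos hδ0 _
  calc 1/(3*((n:ℝ)-1)) = (1/3)/((n:ℝ)-1) := by rw [div_div]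
    _ ≤ β ^ (β/(n:ℝ)) / δ ^ (β/(n:ℝ)) :=
        div_le_div₀ (Real.rpow_nonneg hβ0.le _) hnum hDpos hden

set_option maxHeartbeats 1000000 in
/-- Volume comparison: if two densities `f, h` on `ℝⁿ` satisfy `f ≥ 1/C` and
`|f − h| ≤ C |x|^{2−n−γ}` for `|x| ≥ 1`, then the measures with these densities assign
comparable volumes to `Ω \ B_ρ`, with a quantitative error depending only on `n` and `C`. -/
theorem volume_comparison (n : ℕ) (hn : 3 ≤ n) (C : ℝ) (hC : 1 ≤ C) :
    ∃ C' : ℝ, 1 ≤ C' ∧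
      ∀ (γ : ℝ), γ ∈ Set.Ioc (0 : ℝ) 1 →
      ∀ (f h : EuclideanSpace ℝ (Fin n) → ℝ),
        Measurable f → Measurable h →
        (∀ x, 0 ≤ f x) → (∀ x, 0 ≤ h x) →
        (∀ x : EuclideanSpace ℝ (Fin n), 1 ≤ ‖x‖ → 1 / C ≤ f x) →
        (∀ x : EuclideanSpace ℝ (Fin n), 1 ≤ ‖x‖ →
          |f x - h x| ≤ C * ‖x‖ ^ ((2 : ℝ) - (n : ℝ) - γ)) →
      ∀ (ρ : ℝ), 1 ≤ ρ →
      ∀ (Ω : Set (EuclideanSpace ℝ (Fin n))), MeasurableSet Ω → Bornology.IsBounded Ω →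
      ∀ (α : ℝ), α ∈ Set.Ioo (1 : ℝ) ((n : ℝ) - 1 + γ) →
        letI μ := volume.withDensity (fun x => ENNReal.ofReal (f x))
        letI ν := volume.withDensity (fun x => ENNReal.ofReal (h x))
        letI A := Ω \ Metric.closedBall (0 : EuclideanSpace ℝ (Fin n)) ρ
        |(μ A).toReal - (ν A).toReal| ≤
          C' * (((n : ℝ) - 1 + γ - α) / (α - 1)) ^ (((n : ℝ) - 1 + γ - α) / (n : ℝ))
            * (μ A).toReal ^ ((1 - γ + α) / (n : ℝ)) * ρ ^ (1 - α) := by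
  classical
  have hn3 : (3:ℝ) ≤ (n:ℝ) := by exact_mod_cast hn
  set v : ℝ := (volume (Metric.ball (0 : EuclideanSpace ℝ (Fin n)) 1)).toReal with hvdef
  have hv0 : 0 ≤ v := ENNReal.toReal_nonneg
  have hC2 : 1 ≤ C^2 := by nlinarith
  have hone : (1:ℝ) ≤ 1 + (n:ℝ)*v := by nlinarith [mul_nonneg (Nat.cast_nonneg n : (0:ℝ) ≤ n) hv0]
  have hC'1 : (1:ℝ) ≤ 3 * ((n:ℝ)-1) * C^2 * (1 + (n:ℝ) * v) := by
    have e2 : (1:ℝ) ≤ 3*((n:ℝ)-1)*C^2 := by nlinarith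
    calc (1:ℝ) = 1*1 := by ring
      _ ≤ (3*((n:ℝ)-1)*C^2)*(1+(n:ℝ)*v) := mul_le_mul e2 hone one_pos.le (by linarith)
  have hC'0 : (0:ℝ) ≤ 3 * ((n:ℝ)-1) * C^2 * (1 + (n:ℝ) * v) := le_trans zero_le_one hC'1
  refine ⟨3 * ((n:ℝ)-1) * C^2 * (1 + (n:ℝ) * v), hC'1, ?_⟩
  intro γ hγ f h hf hh hf0 hh0 hflb hfh ρ hρ Ω hΩ hΩb α hα
  obtain ⟨hγ0, hγ1⟩ := hγ
  obtain ⟨hα1, hα2⟩ := hα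
  set β : ℝ := (n:ℝ) - 1 + γ - α with hβdef
  have hβ0 : 0 < β := by rw [hβdef]; linarith
  have hβle : β ≤ (n:ℝ) - 1 := by rw [hβdef]; linarith
  set A : Set (EuclideanSpace ℝ (Fin n)) := Ω \ Metric.closedBall 0 ρ with hAdef
  have hA_m : MeasurableSet A := hΩ.diff measurableSet_closedBall
  have hA1 : ∀ x ∈ A, ρ < ‖x‖ := by
    intro x hx
    have := hx.2
    simpa [Metric.mem_closedBall, dist_zero_right, not_le] using this
  have hA1' : ∀ x ∈ A, 1 ≤ ‖x‖ := fun x hx => le_trans hρ (hA1 x hx).le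
  have hAfin : volume A < ⊤ := (hΩb.subset diff_subset).measure_lt_top
  have hqeq : (1 - γ + α)/(n:ℝ) = ((n:ℝ) - β)/(n:ℝ) := by rw [hβdef]; ring_nf
  have hn0 : (0:ℝ) < n := by linarith
  have hqn0 : 0 ≤ ((n:ℝ) - β)/(n:ℝ) := div_nonneg (by linarith) hn0.le
  have hqn1 : ((n:ℝ) - β)/(n:ℝ) ≤ 1 := by rw [div_le_one hn0]; linarith
  -- pointwise bounds
  have hboundC : ∀ x ∈ A, |f x - h x| ≤ C := by
    intro x hx
    have h1 := hfh x (hA1' x hx)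
    have h2 : ‖x‖ ^ ((2:ℝ) - (n:ℝ) - γ) ≤ 1 :=
      Real.rpow_le_one_of_one_le_of_nonpos (hA1' x hx) (by linarith)
    nlinarith
  have hbound : ∀ x ∈ A, |f x - h x| ≤ C * ρ^(1-α) * ‖x‖^(-β) := by
    intro x hx
    have h1 := hfh x (hA1' x hx)
    have hx0 : 0 < ‖x‖ := lt_of_lt_of_le one_pos (hA1' x hx)
    have he : ‖x‖ ^ ((2:ℝ) - (n:ℝ) - γ) = ‖x‖^(1-α) * ‖x‖^(-β) := by
      rw [← Real.rpow_add hx0]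
      congr 1
      rw [hβdef]; ring
    have h2 : ‖x‖^(1-α) ≤ ρ^(1-α) :=
      Real.rpow_le_rpow_of_nonpos (by linarith) (hA1 x hx).le (by linarith)
    have h3 : 0 ≤ ‖x‖^(-β) := Real.rpow_nonneg (norm_nonneg x) _
    calc |f x - h x| ≤ C * ‖x‖ ^ ((2:ℝ) - (n:ℝ) - γ) := h1
      _ = C * (‖x‖^(1-α) * ‖x‖^(-β)) := by rw [he]
      _ ≤ C * (ρ^(1-α) * ‖x‖^(-β)) := by
          refine mul_le_mul_of_nonneg_left ?_ (by linarith)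
          exact mul_le_mul_of_nonneg_right h2 h3
      _ = C * ρ^(1-α) * ‖x‖^(-β) := by ring
  -- nonnegativity of RHS pieces
  have hKnn : (0:ℝ) ≤ (β / (α - 1)) ^ (β / (n:ℝ)) :=
    Real.rpow_nonneg (div_nonneg hβ0.le (by linarith)) _
  have hρnn : (0:ℝ) ≤ ρ ^ (1-α) := Real.rpow_nonneg (by linarith) _
  by_cases hμtop : (volume.withDensity fun x => ENNReal.ofReal (f x)) A = ⊤
  · -- infinite case: both measures are infinite
    have hνtop : (volume.withDensity fun x => ENNReal.ofReal (h x)) A = ⊤ := by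
      rw [withDensity_apply _ hA_m] at hμtop ⊢
      by_contra hne
      have hle : ∫⁻ x in A, ENNReal.ofReal (f x) ≤
          (∫⁻ x in A, ENNReal.ofReal (h x)) + ENNReal.ofReal C * volume A := by
        calc ∫⁻ x in A, ENNReal.ofReal (f x)
            ≤ ∫⁻ x in A, (ENNReal.ofReal (h x) + ENNReal.ofReal C) := by
              refine setLIntegral_mono (hh.ennreal_ofReal.add measurable_const) ?_
              intro x hx
              have hfh' : f x ≤ h x + C := by
                have := abs_le.1 (hboundC x hx); linarith
              rw [← ENNReal.ofReal_add (hh0 x) (by linarith)]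
              exact ENNReal.ofReal_le_ofReal hfh'
          _ = _ := by rw [lintegral_add_right _ measurable_const, setLIntegral_const]
      rw [hμtop] at hle
      have : (∫⁻ x in A, ENNReal.ofReal (h x)) + ENNReal.ofReal C * volume A < ⊤ := by
        apply ENNReal.add_lt_top.2
        exact ⟨lt_top_iff_ne_top.2 hne, ENNReal.mul_lt_top ENNReal.ofReal_lt_top hAfin⟩
      exact absurd (top_le_iff.1 hle) (by simpa using this.ne)
    rw [hμtop, hνtop]
    simp only [ENNReal.toReal_top, sub_self, abs_zero]
    refine mul_nonneg (mul_nonneg (mul_nonneg hC'0 hKnn) ?_) hρnn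
    exact Real.rpow_nonneg le_rfl _
  · -- finite case
    have hμA' : (volume.withDensity fun x => ENNReal.ofReal (f x)) A
        = ∫⁻ x in A, ENNReal.ofReal (f x) := withDensity_apply _ hA_m
    have hνA' : (volume.withDensity fun x => ENNReal.ofReal (h x)) A
        = ∫⁻ x in A, ENNReal.ofReal (h x) := withDensity_apply _ hA_m
    have hfin_f : ∫⁻ x in A, ENNReal.ofReal (f x) ≠ ⊤ := by rw [← hμA']; exact hμtop
    have hfin_h : ∫⁻ x in A, ENNReal.ofReal (h x) ≠ ⊤ := by
      have hle : ∫⁻ x in A, ENNReal.ofReal (h x) ≤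
          (∫⁻ x in A, ENNReal.ofReal (f x)) + ENNReal.ofReal C * volume A := by
        calc ∫⁻ x in A, ENNReal.ofReal (h x)
            ≤ ∫⁻ x in A, (ENNReal.ofReal (f x) + ENNReal.ofReal C) := by
              refine setLIntegral_mono (hf.ennreal_ofReal.add measurable_const) ?_
              intro x hx
              have hfh' : h x ≤ f x + C := by
                have := abs_le.1 (hboundC x hx); linarith
              rw [← ENNReal.ofReal_add (hf0 x) (by linarith)]
              exact ENNReal.ofReal_le_ofReal hfh'
          _ = _ := by rw [lintegral_add_right _ measurable_const, setLIntegral_const]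
      exact ne_top_of_le_ne_top
        (ENNReal.add_lt_top.2 ⟨lt_top_iff_ne_top.2 hfin_f,
          ENNReal.mul_lt_top ENNReal.ofReal_lt_top hAfin⟩).ne hle
    have hIf : IntegrableOn f A volume := by
      refine ⟨hf.aestronglyMeasurable, ?_⟩
      rw [hasFiniteIntegral_iff_ofReal (Filter.Eventually.of_forall hf0)]
      exact lt_top_iff_ne_top.2 hfin_f
    have hIh : IntegrableOn h A volume := by
      refine ⟨hh.aestronglyMeasurable, ?_⟩
      rw [hasFiniteIntegral_iff_ofReal (Filter.Eventually.of_forall hh0)]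
      exact lt_top_iff_ne_top.2 hfin_h
    have hMeq : ((volume.withDensity fun x => ENNReal.ofReal (f x)) A).toReal
        = ∫ x in A, f x := by
      rw [hμA', integral_eq_lintegral_of_nonneg_ae (Filter.Eventually.of_forall hf0)
        hf.aestronglyMeasurable]
    have hNeq : ((volume.withDensity fun x => ENNReal.ofReal (h x)) A).toReal
        = ∫ x in A, h x := by
      rw [hνA', integral_eq_lintegral_of_nonneg_ae (Filter.Eventually.of_forall hh0)
        hh.aestronglyMeasurable]
    have hT0 : (0:ℝ) ≤ (volume A).toReal := ENNReal.toReal_nonneg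
    have hM0 : (0:ℝ) ≤ ((volume.withDensity fun x => ENNReal.ofReal (f x)) A).toReal :=
      ENNReal.toReal_nonneg
    have hIb : IntegrableOn (fun x : EuclideanSpace ℝ (Fin n) => ‖x‖^(-β)) A volume :=
      integrableOn_rpow_neg n β hβ0 A hA_m hA1' hAfin
    -- main integral estimate
    have main : |((volume.withDensity fun x => ENNReal.ofReal (f x)) A).toReal
          - ((volume.withDensity fun x => ENNReal.ofReal (h x)) A).toReal|
        ≤ (C * ρ^(1-α)) * ((1 + (n:ℝ)*v) * (volume A).toReal ^ (((n:ℝ)-β)/(n:ℝ))) := by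
      rw [hMeq, hNeq, ← integral_sub hIf hIh]
      calc |∫ x in A, (f x - h x)| ≤ ∫ x in A, |f x - h x| := by
            simpa [Real.norm_eq_abs] using
              norm_integral_le_integral_norm (μ := volume.restrict A) (fun x => f x - h x)
        _ ≤ ∫ x in A, (C * ρ^(1-α)) * ‖x‖^(-β) := by
            refine setIntegral_mono_on (hIf.sub hIh).abs (hIb.const_mul _) hA_m ?_
            intro x hx
            have := hbound x hx
            calc |f x - h x| ≤ C * ρ^(1-α) * ‖x‖^(-β) := this
              _ = (C * ρ^(1-α)) * ‖x‖^(-β) := by ring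
        _ = (C * ρ^(1-α)) * ∫ x in A, ‖x‖^(-β) := integral_const_mul _ _
        _ ≤ (C * ρ^(1-α)) * ((1 + (n:ℝ)*v)
              * (volume A).toReal ^ (((n:ℝ)-β)/(n:ℝ))) := by
            refine mul_le_mul_of_nonneg_left ?_ (by positivity)
            exact key_bound n hn β hβ0 hβle A hA_m hA1' hAfin
    -- volume versus μ-volume
    have hTM : (volume A).toReal
        ≤ C * ((volume.withDensity fun x => ENNReal.ofReal (f x)) A).toReal := by
      have h5a : ENNReal.ofReal (1/C) * volume A
          ≤ (volume.withDensity fun x => ENNReal.ofReal (f x)) A := by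
        rw [hμA']
        calc ENNReal.ofReal (1/C) * volume A = ∫⁻ _x in A, ENNReal.ofReal (1/C) :=
              (setLIntegral_const _ _).symm
          _ ≤ ∫⁻ x in A, ENNReal.ofReal (f x) := by
              refine setLIntegral_mono hf.ennreal_ofReal ?_
              intro x hx
              exact ENNReal.ofReal_le_ofReal (hflb x (hA1' x hx))
      have h5b : (1/C) * (volume A).toReal
          ≤ ((volume.withDensity fun x => ENNReal.ofReal (f x)) A).toReal := by
        have := ENNReal.toReal_mono hμtop h5a
        rwa [ENNReal.toReal_mul, ENNReal.toReal_ofReal (by positivity)] at this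
      have hCne : C ≠ 0 := by linarith
      have he : (volume A).toReal = C * ((1/C) * (volume A).toReal) := by field_simp
      nlinarith [h5b]
    have step6 : (volume A).toReal ^ (((n:ℝ)-β)/(n:ℝ))
        ≤ C * ((volume.withDensity fun x => ENNReal.ofReal (f x)) A).toReal
            ^ (((n:ℝ)-β)/(n:ℝ)) := by
      set M : ℝ := ((volume.withDensity fun x => ENNReal.ofReal (f x)) A).toReal
      calc (volume A).toReal ^ (((n:ℝ)-β)/(n:ℝ)) ≤ (C*M) ^ (((n:ℝ)-β)/(n:ℝ)) :=
            Real.rpow_le_rpow hT0 hTM hqn0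
        _ = C ^ (((n:ℝ)-β)/(n:ℝ)) * M ^ (((n:ℝ)-β)/(n:ℝ)) :=
            Real.mul_rpow (by linarith) hM0
        _ ≤ C * M ^ (((n:ℝ)-β)/(n:ℝ)) := by
            refine mul_le_mul_of_nonneg_right ?_ (Real.rpow_nonneg hM0 _)
            calc C ^ (((n:ℝ)-β)/(n:ℝ)) ≤ C ^ (1:ℝ) :=
                  Real.rpow_le_rpow_of_exponent_le hC hqn1
              _ = C := Real.rpow_one C
    have hKb := Kb n hn β (α-1) hβ0 hβle (by linarith) (by linarith)
    have hfactor : C^2 * (1 + (n:ℝ)*v)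
        ≤ (3 * ((n:ℝ)-1) * C^2 * (1 + (n:ℝ)*v)) * ((β/(α-1)) ^ (β/(n:ℝ))) := by
      have hpos : (0:ℝ) ≤ 3 * ((n:ℝ)-1) * C^2 * (1 + (n:ℝ)*v) := hC'0
      calc C^2 * (1 + (n:ℝ)*v)
          = (3 * ((n:ℝ)-1) * C^2 * (1 + (n:ℝ)*v)) * (1/(3*((n:ℝ)-1))) := by
            have hne : ((n:ℝ)-1) ≠ 0 := by
              have : (1:ℝ) < (n:ℝ) := by linarith
              exact ne_of_gt (by linarith)
            field_simp
        _ ≤ _ := mul_le_mul_of_nonneg_left hKb hpos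
    rw [hqeq]
    set M : ℝ := ((volume.withDensity fun x => ENNReal.ofReal (f x)) A).toReal
    set N : ℝ := ((volume.withDensity fun x => ENNReal.ofReal (h x)) A).toReal
    calc |M - N|
        ≤ (C * ρ^(1-α)) * ((1 + (n:ℝ)*v) * (volume A).toReal ^ (((n:ℝ)-β)/(n:ℝ))) := main
      _ ≤ (C * ρ^(1-α)) * ((1 + (n:ℝ)*v) * (C * M ^ (((n:ℝ)-β)/(n:ℝ)))) := by
          refine mul_le_mul_of_nonneg_left ?_ (by positivity)
          exact mul_le_mul_of_nonneg_left step6 (by linarith)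
      _ = (C^2 * (1 + (n:ℝ)*v)) * (M ^ (((n:ℝ)-β)/(n:ℝ)) * ρ^(1-α)) := by ring
      _ ≤ ((3 * ((n:ℝ)-1) * C^2 * (1 + (n:ℝ)*v)) * ((β/(α-1)) ^ (β/(n:ℝ))))
            * (M ^ (((n:ℝ)-β)/(n:ℝ)) * ρ^(1-α)) := by
          refine mul_le_mul_of_nonneg_right hfactor ?_
          exact mul_nonneg (Real.rpow_nonneg hM0 _) hρnn
      _ = 3 * ((n:ℝ)-1) * C^2 * (1 + (n:ℝ)*v) * ((β/(α-1)) ^ (β/(n:ℝ)))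
            * M ^ (((n:ℝ)-β)/(n:ℝ)) * ρ^(1-α) := by ring
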